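/- Let I = {i_1 < ... < i_r} and J = {j_1 < ... < j_r} be sets of nonnegative integers, and define s_{I,J} as the determinant of the r×r matrix whose (k,l)-entry is C(i_k, j_l). Then the matrices (s_{I,J})_{I,J} and ((-1)^{∑I - ∑J} s_{I,J})_{I,J}, indexed by sets of size r ordered compatibly with ≤ (componentwise order on sorted tuples), are mutually inverse: ∑_{K} (-1)^{∑I - ∑K} s_{I,K} s_{K,J} = δ_{I,J}. -/

import Mathlib

open scoped BigOperators
open Finset Matrix Equiv

lemma pascal_inv (N i j : ℕ) (hiN : i ≤ N) :
    ∑ x ∈ Finset.range (N + 1), (-1 : ℤ) ^ (i + x) * (i.choose x) * (x.choose j)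
      = if i = j then 1 else 0 := by
  rcases lt_or_ge i j with hij | hji
  · rw [if_neg (by omega)]
    apply Finset.sum_eq_zero
    intro x hx
    rcases le_or_gt x i with h | h
    · rw [Nat.choose_eq_zero_of_lt (lt_of_le_of_lt h hij)]; push_cast; ring
    · rw [Nat.choose_eq_zero_of_lt h]; push_cast; ring
  · have h1 : ∑ x ∈ Finset.range (N + 1), (-1 : ℤ) ^ (i + x) * (i.choose x) * (x.choose j)
        = ∑ x ∈ Finset.Ico j (i + 1), (-1 : ℤ) ^ (i + x) * (i.choose x) * (x.choose j) := by
      refine (Finset.sum_subset ?_ ?_).symm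
      · intro x hx
        simp only [Finset.mem_Ico] at hx
        exact Finset.mem_range.2 (by omega)
      · intro x hx hx'
        simp only [Finset.mem_Ico, not_and, not_lt] at hx'
        rcases lt_or_ge x j with h | h
        · rw [Nat.choose_eq_zero_of_lt h]; push_cast; ring
        · rw [Nat.choose_eq_zero_of_lt (by have := hx' h; omega)]; push_cast; ring
    rw [h1, Finset.sum_Ico_eq_sum_range, show i + 1 - j = (i - j) + 1 by omega]
    have h3 : ∀ t ∈ Finset.range ((i - j) + 1),
        (-1 : ℤ) ^ (i + (j + t)) * ((i.choose (j + t) : ℤ)) * (((j + t).choose j : ℤ))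
          = ((-1 : ℤ) ^ (i + j) * (i.choose j)) * ((-1 : ℤ) ^ t * ((i - j).choose t)) := by
      intro t ht
      simp only [Finset.mem_range] at ht
      have hkn : j + t ≤ i := by omega
      have hmul := Nat.choose_mul (n := i) (Nat.le_add_right j t)
      rw [Nat.add_sub_cancel_left] at hmul
      have hc : ((i.choose (j + t)) : ℤ) * (((j + t).choose j) : ℤ)
          = ((i.choose j) : ℤ) * (((i - j).choose t) : ℤ) := by exact_mod_cast congrArg (Nat.cast : ℕ → ℤ) hmul
      rw [show i + (j + t) = (i + j) + t by omega, pow_add]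
      linear_combination ((-1 : ℤ) ^ (i + j) * (-1 : ℤ) ^ t) * hc
    rw [Finset.sum_congr rfl h3, ← Finset.mul_sum, Int.alternating_sum_range_choose]
    by_cases hij : i = j
    · subst hij
      simp [Even.neg_one_pow ⟨i, rfl⟩]
    · rw [if_neg (by omega : ¬ i - j = 0), if_neg hij, mul_zero]



lemma cauchy_binet {n r : ℕ} (A : Matrix (Fin r) (Fin n) ℤ) (B : Matrix (Fin n) (Fin r) ℤ) :
    (A * B).det = ∑ g ∈ Finset.univ.filter (fun g : Fin r → Fin n => StrictMono g),
      (A.submatrix id g).det * (B.submatrix g id).det := by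
  have step1 : (A * B).det
      = ∑ p : Fin r → Fin n, (A.submatrix id p).det * ∏ i, B (p i) i := by
    simp only [det_apply', mul_apply, Finset.prod_univ_sum, Finset.mul_sum,
      Fintype.piFinset_univ]
    rw [Finset.sum_comm]
    refine Finset.sum_congr rfl fun p _ => ?_
    rw [Finset.sum_mul]
    refine Finset.sum_congr rfl fun σ _ => ?_
    rw [Finset.prod_mul_distrib, mul_assoc]
    simp only [Matrix.submatrix_apply, id_eq]
  have step2 : ∑ p : Fin r → Fin n, (A.submatrix id p).det * ∏ i, B (p i) i
      = ∑ p ∈ Finset.univ.filter (fun p : Fin r → Fin n => Function.Injective p),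
          (A.submatrix id p).det * ∏ i, B (p i) i := by
    refine (Finset.sum_filter_of_ne fun p _ hne => ?_).symm
    by_contra hinj
    rw [Function.Injective] at hinj; push_neg at hinj
    obtain ⟨a, b, hab, hne'⟩ := hinj
    exact hne (by rw [Matrix.det_zero_of_column_eq hne' (fun k => by simp [hab]), zero_mul])
  have step3 : ∑ p ∈ Finset.univ.filter (fun p : Fin r → Fin n => Function.Injective p),
          (A.submatrix id p).det * ∏ i, B (p i) i
      = ∑ gσ ∈ (Finset.univ.filter (fun g : Fin r → Fin n => StrictMono g)) ×ˢ
            (Finset.univ : Finset (Equiv.Perm (Fin r))),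
          ((Equiv.Perm.sign gσ.2 : ℤ) * (A.submatrix id gσ.1).det) *
            ∏ i, B (gσ.1 (gσ.2 i)) i := by
    refine (Finset.sum_bij (fun gσ _ => gσ.1 ∘ gσ.2) ?_ ?_ ?_ ?_).symm
    · rintro ⟨g, σ⟩ hgσ
      simp only [Finset.mem_product, Finset.mem_filter, Finset.mem_univ, true_and] at hgσ ⊢
      exact hgσ.1.injective.comp σ.injective
    · rintro ⟨g, σ⟩ hgσ ⟨g', σ'⟩ hgσ' heq
      simp only [Finset.mem_product, Finset.mem_filter, Finset.mem_univ, true_and,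
        and_true] at hgσ hgσ'
      have heq' : g ∘ σ = g' ∘ σ' := heq
      have : WellFoundedLT (Fin r) := Finite.to_wellFoundedLT
      have hrange : Set.range g = Set.range g' := by
        rw [← σ.surjective.range_comp g, ← σ'.surjective.range_comp g', heq']
      have hg : g = g' := (hgσ.range_inj hgσ').mp hrange
      subst hg
      have hσ : σ = σ' := by
        ext i
        exact congrArg Fin.val (hgσ.injective (congrFun heq' i))
      rw [hσ]
    · intro p hp
      simp only [Finset.mem_filter, Finset.mem_univ, true_and] at hp
      have hcard : (Finset.univ.image p).card = r := by
        rw [Finset.card_image_of_injective _ hp, Finset.card_univ, Fintype.card_fin]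
      set g := (Finset.univ.image p).orderEmbOfFin hcard with hg
      have hmem : ∀ i, p i ∈ Finset.univ.image p := fun i =>
        Finset.mem_image_of_mem p (Finset.mem_univ i)
      have hσinj : Function.Injective
          (fun i => ((Finset.univ.image p).orderIsoOfFin hcard).symm ⟨p i, hmem i⟩) := by
        intro a b hab
        apply hp
        have := congrArg (((Finset.univ.image p).orderIsoOfFin hcard)) hab
        simp only [OrderIso.apply_symm_apply] at this
        exact congrArg Subtype.val this
      let σ : Equiv.Perm (Fin r) := Equiv.ofBijective _
        (Finite.injective_iff_bijective.mp hσinj)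
      refine ⟨⟨g, σ⟩, ?_, ?_⟩
      · simp only [Finset.mem_product, Finset.mem_filter, Finset.mem_univ, true_and, and_true]
        exact ((Finset.univ.image p).orderEmbOfFin hcard).strictMono
      · funext i
        show g (σ i) = p i
        simp only [σ, Equiv.ofBijective_apply, hg]
        rw [← Finset.coe_orderIsoOfFin_apply, OrderIso.apply_symm_apply]
    · rintro ⟨g, σ⟩ hgσ
      simp only
      have hsub : A.submatrix id (g ∘ σ) = (A.submatrix id g).submatrix id σ := by
        rw [Matrix.submatrix_submatrix]
        rfl
      rw [hsub, Matrix.det_permute' σ (A.submatrix id g)]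
      simp [Function.comp]
  have step4 : ∑ gσ ∈ (Finset.univ.filter (fun g : Fin r → Fin n => StrictMono g)) ×ˢ
            (Finset.univ : Finset (Equiv.Perm (Fin r))),
          ((Equiv.Perm.sign gσ.2 : ℤ) * (A.submatrix id gσ.1).det) *
            ∏ i, B (gσ.1 (gσ.2 i)) i
      = ∑ g ∈ Finset.univ.filter (fun g : Fin r → Fin n => StrictMono g),
          (A.submatrix id g).det * (B.submatrix g id).det := by
    rw [Finset.sum_product]
    refine Finset.sum_congr rfl fun g _ => ?_
    rw [det_apply' (B.submatrix g id), Finset.mul_sum]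
    refine Finset.sum_congr rfl fun σ _ => ?_
    simp only [Matrix.submatrix_apply, id_eq, Int.cast_id]
    ring
  rw [step1, step2, step3, step4]



lemma det_delta {r : ℕ} (I J : Fin r → ℕ) (hI : StrictMono I) (hJ : StrictMono J) :
    Matrix.det (Matrix.of fun k l : Fin r => if I k = J l then (1 : ℤ) else 0)
      = if I = J then 1 else 0 := by
  by_cases h : I = J
  · subst h
    rw [if_pos rfl]
    have he : (Matrix.of fun k l : Fin r => if I k = I l then (1 : ℤ) else 0) = 1 := by
      ext k l
      by_cases hkl : k = l
      · subst hkl; simp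
      · have : I k ≠ I l := fun hh => hkl (hI.injective hh)
        simp [Matrix.one_apply, hkl, this]
    rw [he, Matrix.det_one]
  · rw [if_neg h]
    have : WellFoundedLT (Fin r) := Finite.to_wellFoundedLT
    have hrange : Set.range I ≠ Set.range J := fun hr => h ((hI.range_inj hJ).mp hr)
    by_cases hsub : Set.range I ⊆ Set.range J
    · have hsub' : ¬ Set.range J ⊆ Set.range I := by
        intro h2
        exact hrange (le_antisymm hsub h2)
      obtain ⟨x, hxJ, hxI⟩ := Set.not_subset.mp hsub'
      obtain ⟨l, rfl⟩ := hxJ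
      apply Matrix.det_eq_zero_of_column_eq_zero l
      intro k
      have : I k ≠ J l := fun hh => hxI ⟨k, hh⟩
      simp [this]
    · obtain ⟨x, hxI, hxJ⟩ := Set.not_subset.mp hsub
      obtain ⟨k, rfl⟩ := hxI
      apply Matrix.det_eq_zero_of_row_eq_zero k
      intro l
      have : I k ≠ J l := fun hh => hxJ ⟨l, hh.symm⟩
      simp [this]


/-- The matrices `(s_{I,J})` and `((-1)^{∑I-∑J} s_{I,J})`, where
`s_{I,J} = det(C(i_k, j_l))`, are mutually inverse:
`∑_K (-1)^{∑I-∑K} s_{I,K} s_{K,J} = δ_{I,J}`.  The sum runs over all strictly increasing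
size-`r` tuples `K`; only those with `K ≤ I` componentwise contribute (otherwise
`s_{I,K} = 0`), so the sum may be taken over `K` with entries `≤ ∑I`.
(Since `∑K ≤ ∑I` for nonzero terms, `(-1)^{∑I-∑K} = (-1)^{∑I+∑K}`.) -/



theorem stmt11 (r : ℕ) (I J : Fin r → ℕ) (hI : StrictMono I) (hJ : StrictMono J) :
    ∑ K ∈ (Fintype.piFinset fun _ : Fin r => Finset.range ((∑ k, I k) + 1)).filter
        (fun K => ∀ k l : Fin r, k < l → K k < K l),
      (-1 : ℤ) ^ ((∑ k, I k) + ∑ k, K k) *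
        Matrix.det (Matrix.of fun k l : Fin r => ((I k).choose (K l) : ℤ)) *
        Matrix.det (Matrix.of fun k l : Fin r => ((K k).choose (J l) : ℤ))
      = if I = J then 1 else 0 := by
  set N := ∑ k, I k with hN
  set A : Matrix (Fin r) (Fin (N + 1)) ℤ :=
    Matrix.of fun k x => (-1 : ℤ) ^ (I k + (x : ℕ)) * ((I k).choose (x : ℕ) : ℤ) with hA
  set B : Matrix (Fin (N + 1)) (Fin r) ℤ :=
    Matrix.of fun x l => (((x : ℕ)).choose (J l) : ℤ) with hB
  have stepA : ∑ K ∈ (Fintype.piFinset fun _ : Fin r => Finset.range (N + 1)).filter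
        (fun K => ∀ k l : Fin r, k < l → K k < K l),
      (-1 : ℤ) ^ (N + ∑ k, K k) *
        Matrix.det (Matrix.of fun k l : Fin r => ((I k).choose (K l) : ℤ)) *
        Matrix.det (Matrix.of fun k l : Fin r => ((K k).choose (J l) : ℤ))
      = ∑ g ∈ Finset.univ.filter (fun g : Fin r → Fin (N + 1) => StrictMono g),
        (-1 : ℤ) ^ (N + ∑ k, (g k : ℕ)) *
          Matrix.det (Matrix.of fun k l : Fin r => ((I k).choose (g l : ℕ) : ℤ)) *
          Matrix.det (Matrix.of fun k l : Fin r => (((g k : ℕ)).choose (J l) : ℤ)) := by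
    refine (Finset.sum_bij (fun g _ => fun k => ((g k : ℕ))) ?_ ?_ ?_ ?_).symm
    · intro g hg
      simp only [Finset.mem_filter, Finset.mem_univ, true_and] at hg
      simp only [Finset.mem_filter, Fintype.mem_piFinset, Finset.mem_range]
      exact ⟨fun k => (g k).isLt, fun k l hkl => hg hkl⟩
    · intro g hg g' hg' heq
      funext k
      exact Fin.ext (congrFun heq k)
    · intro K hK
      simp only [Finset.mem_filter, Fintype.mem_piFinset, Finset.mem_range] at hK
      refine ⟨fun k => ⟨K k, hK.1 k⟩, ?_, rfl⟩
      simp only [Finset.mem_filter, Finset.mem_univ, true_and]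
      intro k l hkl
      exact hK.2 k l hkl
    · intro g hg
      rfl
  have stepB : ∀ g ∈ Finset.univ.filter (fun g : Fin r → Fin (N + 1) => StrictMono g),
      (-1 : ℤ) ^ (N + ∑ k, (g k : ℕ)) *
          Matrix.det (Matrix.of fun k l : Fin r => ((I k).choose (g l : ℕ) : ℤ)) *
          Matrix.det (Matrix.of fun k l : Fin r => (((g k : ℕ)).choose (J l) : ℤ))
        = (A.submatrix id g).det * (B.submatrix g id).det := by
    intro g _
    have e1 : A.submatrix id g
        = Matrix.of (fun k l : Fin r => ((-1 : ℤ) ^ (I k)) *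
            (Matrix.of (fun k l : Fin r => ((-1 : ℤ) ^ ((g l : ℕ))) *
              ((I k).choose (g l : ℕ) : ℤ))) k l) := by
      ext k l
      simp only [Matrix.submatrix_apply, id_eq, Matrix.of_apply, hA, pow_add]
      ring
    have e2 : B.submatrix g id = Matrix.of fun k l : Fin r => (((g k : ℕ)).choose (J l) : ℤ) := by
      ext k l
      simp only [Matrix.submatrix_apply, id_eq, Matrix.of_apply, hB]
    rw [e1, e2, Matrix.det_mul_column,
      (show (Matrix.of fun k l : Fin r => (-1 : ℤ) ^ ((g l : ℕ)) * ((I k).choose (g l : ℕ) : ℤ)).det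
          = (∏ l, (-1 : ℤ) ^ ((g l : ℕ))) * (Matrix.of fun k l : Fin r => ((I k).choose (g l : ℕ) : ℤ)).det
        from Matrix.det_mul_row _ _),
      Finset.prod_pow_eq_pow_sum, Finset.prod_pow_eq_pow_sum, ← hN]
    rw [pow_add]
    show _ = (-1 : ℤ) ^ N *
        (((-1 : ℤ) ^ (∑ k, (g k : ℕ))) *
          (Matrix.of fun k l : Fin r => ((I k).choose (g l : ℕ) : ℤ)).det) *
        (Matrix.of fun k l : Fin r => (((g k : ℕ)).choose (J l) : ℤ)).det
    ring
  rw [stepA, Finset.sum_congr rfl stepB, ← cauchy_binet A B]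
  have hAB : A * B = Matrix.of fun k l : Fin r => if I k = J l then (1 : ℤ) else 0 := by
    ext k l
    rw [Matrix.mul_apply, Matrix.of_apply]
    have hk : I k ≤ N := Finset.single_le_sum (fun i _ => Nat.zero_le (I i)) (Finset.mem_univ k)
    have := pascal_inv N (I k) (J l) hk
    rw [← Fin.sum_univ_eq_sum_range
      (fun x => (-1 : ℤ) ^ (I k + x) * ((I k).choose x : ℤ) * ((x.choose (J l)) : ℤ))] at this
    rw [← this]
    refine Finset.sum_congr rfl fun x _ => ?_
    simp only [hA, hB, Matrix.of_apply]
  rw [hAB, det_delta I J hI hJ]
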